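/- With the setup of the previous bound, for every positive integer i one also has q^{−1} E[a₀ · 1_{a₀ ≤ 2 a⁺(i) p(i)}] ≤ 3 q^{−1} E[min(a₀, a⁺(i))], where the right side uses that a₀ and a⁺(i) are i.i.d. G_q and p(i) is independent of them with E[p(i)] = 1. -/

import Mathlib

open MeasureTheory ProbabilityTheory Real
open scoped NNReal ENNReal

lemma gauss_pdf_mul (t x : ℝ) :
    gaussianPDFReal 0 1 x * rexp (t * x) = rexp (t ^ 2 / 2) * gaussianPDFReal t 1 x := by
  simp only [gaussianPDFReal, NNReal.coe_one, mul_one, sub_zero]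
  rw [mul_assoc, ← Real.exp_add, mul_left_comm, ← Real.exp_add, mul_eq_mul_left_iff,
    Real.exp_eq_exp]
  left; ring

lemma integrable_exp_gaussian (t : ℝ) :
    Integrable (fun x => rexp (t * x)) (gaussianReal 0 1) := by
  rw [gaussianReal_of_var_ne_zero 0 one_ne_zero,
    show gaussianPDF 0 1 = fun x => (((gaussianPDFReal 0 1 x).toNNReal : ℝ≥0) : ℝ≥0∞) from rfl,
    integrable_withDensity_iff_integrable_smul ((measurable_gaussianPDFReal 0 1).real_toNNReal)]
  have : (fun x => ((gaussianPDFReal 0 1 x).toNNReal : ℝ≥0) • rexp (t * x)) =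
      fun x => rexp (t ^ 2 / 2) * gaussianPDFReal t 1 x := by
    funext x
    rw [NNReal.smul_def, smul_eq_mul, Real.coe_toNNReal _ (gaussianPDFReal_nonneg 0 1 x),
      gauss_pdf_mul]
  rw [this]
  exact (integrable_gaussianPDFReal t 1).const_mul _

lemma integral_exp_gaussian (t : ℝ) :
    ∫ x, rexp (t * x) ∂(gaussianReal 0 1) = rexp (t ^ 2 / 2) := by
  rw [gaussianReal_of_var_ne_zero 0 one_ne_zero,
    show gaussianPDF 0 1 = fun x => (((gaussianPDFReal 0 1 x).toNNReal : ℝ≥0) : ℝ≥0∞) from rfl,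
    integral_withDensity_eq_integral_smul ((measurable_gaussianPDFReal 0 1).real_toNNReal)]
  have : (fun x => ((gaussianPDFReal 0 1 x).toNNReal : ℝ≥0) • rexp (t * x)) =
      fun x => rexp (t ^ 2 / 2) * gaussianPDFReal t 1 x := by
    funext x
    rw [NNReal.smul_def, smul_eq_mul, Real.coe_toNNReal _ (gaussianPDFReal_nonneg 0 1 x),
      gauss_pdf_mul]
  rw [this, integral_const_mul, integral_gaussianPDFReal_eq_one t one_ne_zero, mul_one]

lemma iIndepFun_precomp {ι ι' Ω β : Type*} [MeasurableSpace Ω] {mβ : MeasurableSpace β}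
    {f : ι → Ω → β} {μ : Measure Ω} {g : ι' → ι} (hg : Function.Injective g)
    (h : iIndepFun f μ) : iIndepFun (fun j => f (g j)) μ := by
  classical
  rw [iIndepFun_iff_measure_inter_preimage_eq_mul] at h ⊢
  intro S sets hsets
  rcases S.eq_empty_or_nonempty with rfl | hS
  · simpa using h ∅ (sets := fun _ => Set.univ) (by simp)
  have : Nonempty ι' := ⟨hS.choose⟩
  set g' := Function.invFun g with hg'def
  have hg' : ∀ j, g' (g j) = j := fun j => Function.leftInverse_invFun hg j
  have key := h (S.map ⟨g, hg⟩) (sets := fun i => sets (g' i)) ?_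
  · have h1 : (⋂ i ∈ S.map ⟨g, hg⟩, f i ⁻¹' sets (g' i)) = ⋂ j ∈ S, f (g j) ⁻¹' sets j := by
      ext ω
      simp only [Set.mem_iInter, Finset.mem_map, Function.Embedding.coeFn_mk]
      constructor
      · intro H j hj
        have := H (g j) ⟨j, hj, rfl⟩
        rwa [hg'] at this
      · rintro H i ⟨j, hj, rfl⟩
        rw [hg']; exact H j hj
    rw [h1, Finset.prod_map] at key
    rw [key]
    exact Finset.prod_congr rfl fun j hj => by rw [Function.Embedding.coeFn_mk, hg']
  · intro i hi
    rw [Finset.mem_map] at hi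
    obtain ⟨j, hj, rfl⟩ := hi
    simp only [Function.Embedding.coeFn_mk, hg']
    exact hsets j hj

/-- Core inequality with an abstract positive independent density `p` of mean 1. -/
lemma main_aux {Ω : Type*} [MeasurableSpace Ω] (P : Measure Ω) [IsProbabilityMeasure P]
    (a b p : Ω → ℝ) (ha : Measurable a) (hb : Measurable b) (hp : Measurable p)
    (harange : ∀ ω, a ω ∈ Set.Icc (0 : ℝ) 1) (hbrange : ∀ ω, b ω ∈ Set.Icc (0 : ℝ) 1)
    (hppos : ∀ ω, 0 < p ω) (hpint : Integrable p P) (hEp : ∫ ω, p ω ∂P = 1)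
    (hind : IndepFun (fun ω => min (a ω) (b ω)) p P)
    (q : ℝ) (hq : 0 < q) :
    q⁻¹ * ∫ ω in {ω | a ω ≤ 2 * b ω * p ω}, a ω ∂P
      ≤ 3 * (q⁻¹ * ∫ ω, min (a ω) (b ω) ∂P) := by
  have hs : MeasurableSet {ω | a ω ≤ 2 * b ω * p ω} :=
    measurableSet_le ha (((hb.const_mul 2)).mul hp)
  have haint : Integrable a P := by
    refine (integrable_const (1 : ℝ)).mono' ha.aestronglyMeasurable (ae_of_all _ fun ω => ?_)
    rw [Real.norm_eq_abs, abs_le]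
    exact ⟨by linarith [(harange ω).1], (harange ω).2⟩
  have hmin_abs : ∀ ω, |min (a ω) (b ω)| ≤ 1 := by
    intro ω
    rw [abs_le]
    constructor
    · exact le_min (by linarith [(harange ω).1]) (by linarith [(hbrange ω).1])
    · exact (min_le_left _ _).trans (harange ω).2
  have hone_int : Integrable (fun ω => 1 + 2 * p ω) P :=
    (integrable_const 1).add (hpint.const_mul 2)
  have hprod_int : Integrable (fun ω => min (a ω) (b ω) * (1 + 2 * p ω)) P := by
    refine hone_int.mono' ((ha.min hb).mul (measurable_const.add
      (hp.const_mul 2))).aestronglyMeasurable (ae_of_all _ fun ω => ?_)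
    rw [Real.norm_eq_abs, abs_mul,
      abs_of_nonneg (by nlinarith [hppos ω] : (0 : ℝ) ≤ 1 + 2 * p ω)]
    exact mul_le_of_le_one_left (by nlinarith [hppos ω]) (hmin_abs ω)
  have hpt : ∀ ω, Set.indicator {ω | a ω ≤ 2 * b ω * p ω} a ω
      ≤ min (a ω) (b ω) * (1 + 2 * p ω) := by
    intro ω
    by_cases hω : ω ∈ {ω | a ω ≤ 2 * b ω * p ω}
    · rw [Set.indicator_of_mem hω]
      have hle : a ω ≤ 2 * b ω * p ω := hω
      rcases le_total (a ω) (b ω) with h | h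
      · rw [min_eq_left h]
        nlinarith [(harange ω).1, hppos ω]
      · rw [min_eq_right h]
        nlinarith [(hbrange ω).1, hppos ω]
    · rw [Set.indicator_of_notMem hω]
      exact mul_nonneg (le_min (harange ω).1 (hbrange ω).1) (by nlinarith [hppos ω])
  have hind2 : IndepFun (fun ω => min (a ω) (b ω)) (fun ω => 1 + 2 * p ω) P := by
    have := hind.comp (φ := id) (ψ := fun x : ℝ => 1 + 2 * x) measurable_id
      (measurable_const.add (measurable_id.const_mul 2))
    simpa [Function.comp_def] using this
  have hE2 : (∫ ω, (1 + 2 * p ω) ∂P) = 3 := by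
    rw [integral_add (integrable_const 1) (hpint.const_mul 2), integral_const,
      integral_const_mul, hEp]
    simp; norm_num
  have hchain : (∫ ω in {ω | a ω ≤ 2 * b ω * p ω}, a ω ∂P)
      ≤ (∫ ω, min (a ω) (b ω) ∂P) * 3 := by
    calc (∫ ω in {ω | a ω ≤ 2 * b ω * p ω}, a ω ∂P)
        = ∫ ω, Set.indicator {ω | a ω ≤ 2 * b ω * p ω} a ω ∂P := (integral_indicator hs).symm
      _ ≤ ∫ ω, min (a ω) (b ω) * (1 + 2 * p ω) ∂P :=
          integral_mono (haint.indicator hs) hprod_int hpt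
      _ = (∫ ω, min (a ω) (b ω) ∂P) * (∫ ω, (1 + 2 * p ω) ∂P) :=
          hind2.integral_mul_eq_mul_integral ((ha.min hb)).aestronglyMeasurable
            (measurable_const.add (hp.const_mul 2)).aestronglyMeasurable
      _ = (∫ ω, min (a ω) (b ω) ∂P) * 3 := by rw [hE2]
  refine le_trans (mul_le_mul_of_nonneg_left hchain (inv_nonneg.2 hq.le)) (le_of_eq (by ring))

def embZ : ℕ ↪ (Unit ⊕ ℕ ⊕ ℕ) := ⟨fun u => Sum.inr (Sum.inr u), fun a b hab => by simpa using hab⟩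

theorem size_biased_event_bound_min {Ω : Type*} [MeasurableSpace Ω]
    (P : Measure Ω) [IsProbabilityMeasure P]
    (a0 : Ω → ℝ) (ap : ℕ → Ω → ℝ) (Z : ℕ → Ω → ℝ)
    (ha0meas : Measurable a0) (hapmeas : ∀ i, Measurable (ap i))
    (hZmeas : ∀ u, Measurable (Z u))
    (hindep : iIndepFun
      (Sum.elim (fun _ : Unit => a0) (Sum.elim ap Z)) P)
    (ha0range : ∀ ω, a0 ω ∈ Set.Icc (0 : ℝ) 1)
    (haprange : ∀ i ω, ap i ω ∈ Set.Icc (0 : ℝ) 1)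
    (hiid : ∀ i, P.map (ap i) = P.map a0)
    (q : ℝ) (hq : 0 < q) (hmean : ∫ ω, a0 ω ∂P = q)
    (hZdist : ∀ u, P.map (Z u) = gaussianReal 0 1)
    (Δ : ℝ) (hΔ : Δ ≠ 0) (i : ℕ) (hi : 1 ≤ i) :
    q⁻¹ * ∫ ω in {ω | a0 ω ≤ 2 * ap i ω *
        Real.exp (Δ * (∑ u ∈ Finset.range i, Z u ω) - (i : ℝ) * Δ ^ 2 / 2)}, a0 ω ∂P
      ≤ 3 * (q⁻¹ * ∫ ω, min (a0 ω) (ap i ω) ∂P) := by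
  classical
  have hfmeas : ∀ j, Measurable ((Sum.elim (fun _ : Unit => a0) (Sum.elim ap Z)) j) := by
    rintro (u | j | j)
    exacts [ha0meas, hapmeas j, hZmeas j]
  have hSmeas : Measurable fun ω => ∑ u ∈ Finset.range i, Z u ω :=
    Finset.measurable_sum _ fun u _ => hZmeas u
  have hpmeas : Measurable fun ω =>
      rexp (Δ * (∑ u ∈ Finset.range i, Z u ω) - (i : ℝ) * Δ ^ 2 / 2) :=
    ((hSmeas.const_mul Δ).sub measurable_const).exp
  -- independence of the Z family
  have hZindep : iIndepFun Z P := by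
    have hinj : Function.Injective (fun u : ℕ => (Sum.inr (Sum.inr u) : Unit ⊕ ℕ ⊕ ℕ)) :=
      fun a b hab => by simpa using hab
    exact iIndepFun_precomp (g := fun u : ℕ => (Sum.inr (Sum.inr u) : Unit ⊕ ℕ ⊕ ℕ))
      hinj hindep
  -- integrability and value of exp(Δ Z u)
  have hms : AEStronglyMeasurable (fun x : ℝ => rexp (Δ * x)) (gaussianReal 0 1) :=
    (Real.continuous_exp.comp (continuous_const.mul continuous_id)).aestronglyMeasurable
  have hZint : ∀ u : ℕ, Integrable (fun ω => rexp (Δ * Z u ω)) P := by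
    intro u
    have h1 : Integrable (fun x : ℝ => rexp (Δ * x)) (P.map (Z u)) := by
      rw [hZdist u]; exact integrable_exp_gaussian Δ
    exact (integrable_map_measure (by rw [hZdist u]; exact hms)
      (hZmeas u).aemeasurable).mp h1
  have hZval : ∀ u : ℕ, (∫ ω, rexp (Δ * Z u ω) ∂P) = rexp (Δ ^ 2 / 2) := by
    intro u
    have h1 := integral_map (f := fun x : ℝ => rexp (Δ * x)) (hZmeas u).aemeasurable
      (by rw [hZdist u]; exact hms)
    rw [hZdist u, integral_exp_gaussian] at h1
    exact h1.symm
  -- exp of the sum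
  have hexpS : Integrable (fun ω => rexp (Δ * (∑ u ∈ Finset.range i, Z u ω))) P := by
    have := hZindep.integrable_exp_mul_sum hZmeas (s := Finset.range i) (t := Δ)
      (fun u _ => hZint u)
    simpa [Finset.sum_apply] using this
  have hmgf : (∫ ω, rexp (Δ * (∑ u ∈ Finset.range i, Z u ω)) ∂P)
      = rexp ((i : ℝ) * Δ ^ 2 / 2) := by
    have h1 := hZindep.mgf_sum hZmeas (Finset.range i) (t := Δ)
    simp only [mgf, Finset.sum_apply] at h1
    rw [h1, Finset.prod_congr rfl fun u _ => hZval u, Finset.prod_const, Finset.card_range,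
      ← Real.exp_nat_mul]
    ring_nf
  have hpeq : (fun ω => rexp (Δ * (∑ u ∈ Finset.range i, Z u ω) - (i : ℝ) * Δ ^ 2 / 2))
      = fun ω => rexp (Δ * (∑ u ∈ Finset.range i, Z u ω)) * rexp (-((i : ℝ) * Δ ^ 2 / 2)) := by
    funext ω; rw [sub_eq_add_neg, ← Real.exp_add]
  have hpint : Integrable (fun ω =>
      rexp (Δ * (∑ u ∈ Finset.range i, Z u ω) - (i : ℝ) * Δ ^ 2 / 2)) P := by
    rw [hpeq]; exact hexpS.mul_const _
  have hEp : (∫ ω, rexp (Δ * (∑ u ∈ Finset.range i, Z u ω) - (i : ℝ) * Δ ^ 2 / 2) ∂P) = 1 := by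
    rw [hpeq, integral_mul_const, hmgf, ← Real.exp_add]
    rw [show (i : ℝ) * Δ ^ 2 / 2 + -((i : ℝ) * Δ ^ 2 / 2) = 0 by ring, Real.exp_zero]
  -- independence of min(a0, ap i) and p
  have hdisj : Disjoint ({Sum.inl (), Sum.inr (Sum.inl i)} : Finset (Unit ⊕ ℕ ⊕ ℕ))
      ((Finset.range i).map embZ) := by
    rw [Finset.disjoint_left]
    rintro x hx hx'
    rw [Finset.mem_map] at hx'
    obtain ⟨u, _, rfl⟩ := hx'
    simp only [Finset.mem_insert, Finset.mem_singleton] at hx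
    rcases hx with h | h <;> simp [embZ, Function.Embedding.coeFn_mk] at h <;> cases h
  have hIF := hindep.indepFun_finset ({Sum.inl (), Sum.inr (Sum.inl i)} : Finset (Unit ⊕ ℕ ⊕ ℕ))
    ((Finset.range i).map embZ) hdisj hfmeas
  have h0 : (Sum.inl () : Unit ⊕ ℕ ⊕ ℕ) ∈
      ({Sum.inl (), Sum.inr (Sum.inl i)} : Finset (Unit ⊕ ℕ ⊕ ℕ)) := by simp
  have h1 : (Sum.inr (Sum.inl i) : Unit ⊕ ℕ ⊕ ℕ) ∈
      ({Sum.inl (), Sum.inr (Sum.inl i)} : Finset (Unit ⊕ ℕ ⊕ ℕ)) := by simp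
  have hφ : Measurable (fun x : ↥({Sum.inl (), Sum.inr (Sum.inl i)} :
      Finset (Unit ⊕ ℕ ⊕ ℕ)) → ℝ => min (x ⟨_, h0⟩) (x ⟨_, h1⟩)) :=
    (measurable_pi_apply _).min (measurable_pi_apply _)
  have hψm : Measurable fun y : ↥((Finset.range i).map embZ) → ℝ =>
      ∑ j, y j := Finset.measurable_sum _ fun j _ => measurable_pi_apply j
  have hψ : Measurable fun y : ↥((Finset.range i).map embZ) → ℝ =>
      rexp (Δ * (∑ j, y j) - (i : ℝ) * Δ ^ 2 / 2) :=
    ((hψm.const_mul Δ).sub measurable_const).exp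
  have hind := hIF.comp hφ hψ
  have hcomp2 : ((fun y : ↥((Finset.range i).map embZ) → ℝ =>
      rexp (Δ * (∑ j, y j) - (i : ℝ) * Δ ^ 2 / 2)) ∘
      (fun ω (j : ↥((Finset.range i).map embZ)) =>
        (Sum.elim (fun _ : Unit => a0) (Sum.elim ap Z)) j ω))
      = fun ω => rexp (Δ * (∑ u ∈ Finset.range i, Z u ω) - (i : ℝ) * Δ ^ 2 / 2) := by
    funext ω
    simp only [Function.comp_apply]
    congr 2
    rw [Finset.sum_coe_sort ((Finset.range i).map embZ)
      (fun j => (Sum.elim (fun _ : Unit => a0) (Sum.elim ap Z)) j ω), Finset.sum_map]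
    rfl
  rw [hcomp2] at hind
  have hindfinal : IndepFun (fun ω => min (a0 ω) (ap i ω))
      (fun ω => rexp (Δ * (∑ u ∈ Finset.range i, Z u ω) - (i : ℝ) * Δ ^ 2 / 2)) P := hind
  exact main_aux P a0 (ap i)
    (fun ω => rexp (Δ * (∑ u ∈ Finset.range i, Z u ω) - (i : ℝ) * Δ ^ 2 / 2))
    ha0meas (hapmeas i) hpmeas ha0range (haprange i) (fun ω => Real.exp_pos _)
    hpint hEp hindfinal q hq
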